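/- Let d ≥ 1, let α = (α₁,…,α_d) with each α_j ∈ (0,1), and let T, C₁, C₂, σ₁, σ₂ > 0. Then there exist constants K, δ, ε > 0 with ε < min_j min(α_j, 1−α_j) such that for every ξ ∈ ℝ^d, every t ∈ (0,T], and every strictly positive continuous integrable u : ℝ^d → (0,∞) with ∫u = 1 satisfying C₁ G_{σ₁}(t, x−ξ) ≤ u(x) ≤ C₂ G_{σ₂}(t, x−ξ) for all x ∈ ℝ^d, the following three properties hold: (a) u(x) ≥ δ t^{−d/2} whenever max_j |x_j − ξ_j| ≤ 2K√t; (b) |Q_α^j(u) − ξ_j| ≤ K√t for every j = 1,…,d; (c) ∫_{{x : max_j |x_j − ξ_j| ≥ K√t}} u(x) dx ≤ ε. -/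

import Mathlib

open MeasureTheory Real Set

/-- The heat kernel of the standard heat equation in `ℝ^d` with diffusion coefficient `σ`:
`G_σ(t,x) = (2π t σ²)^{-d/2} exp(-|x|²/(2tσ²))`. -/
noncomputable def heatKernel (d : ℕ) (σ t : ℝ) (x : EuclideanSpace ℝ (Fin d)) : ℝ :=
  (2 * π * t * σ ^ 2) ^ (-(d : ℝ) / 2) * Real.exp (-‖x‖ ^ 2 / (2 * t * σ ^ 2))

section Aux

variable {d : ℕ}

lemma euclid_norm_sq (y : EuclideanSpace ℝ (Fin d)) :
    ‖y‖ ^ 2 = ∑ j, (y j) ^ 2 := by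
  simpa [Real.norm_eq_abs, sq_abs] using PiLp.norm_sq_eq_of_L2 (fun _ : Fin d => ℝ) y

lemma coord_sq_le_norm_sq (y : EuclideanSpace ℝ (Fin d)) (j : Fin d) :
    (y j) ^ 2 ≤ ‖y‖ ^ 2 := by
  rw [euclid_norm_sq]
  exact Finset.single_le_sum (fun i _ => sq_nonneg (y i)) (Finset.mem_univ j)

lemma gauss_integrable {b : ℝ} (hb : 0 < b) :
    Integrable (fun v : EuclideanSpace ℝ (Fin d) => Real.exp (-b * ‖v‖ ^ 2)) := by
  have h := (GaussianFourier.integrable_cexp_neg_mul_sq_norm_add (V := EuclideanSpace ℝ (Fin d))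
      (b := (b : ℂ)) (by simpa using hb) 0 0).norm
  refine h.congr (Filter.Eventually.of_forall fun v => ?_)
  simp [Complex.norm_exp]
  left
  norm_cast

lemma gauss_integral {b : ℝ} (hb : 0 < b) :
    ∫ v : EuclideanSpace ℝ (Fin d), Real.exp (-b * ‖v‖ ^ 2) = (π / b) ^ ((d : ℝ) / 2) := by
  rw [GaussianFourier.integral_rexp_neg_mul_sq_norm hb]
  norm_num [finrank_euclideanSpace_fin]

lemma heatKernel_eq (σ t : ℝ) (y : EuclideanSpace ℝ (Fin d)) :
    heatKernel d σ t y
      = (2 * π * t * σ ^ 2) ^ (-(d : ℝ) / 2) * Real.exp (-(2 * t * σ ^ 2)⁻¹ * ‖y‖ ^ 2) := by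
  unfold heatKernel
  congr 1
  ring_nf

lemma heatKernel_integrable {σ t : ℝ} (hσ : 0 < σ) (ht : 0 < t)
    (ξ : EuclideanSpace ℝ (Fin d)) :
    Integrable (fun x : EuclideanSpace ℝ (Fin d) => heatKernel d σ t (x - ξ)) := by
  have hb : (0 : ℝ) < (2 * t * σ ^ 2)⁻¹ := by positivity
  have h := ((gauss_integrable (d := d) hb).comp_sub_right ξ).const_mul
      ((2 * π * t * σ ^ 2) ^ (-(d : ℝ) / 2))
  exact h.congr (Filter.Eventually.of_forall fun x => (heatKernel_eq σ t (x - ξ)).symm)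

/-- The key tail estimate for the Gaussian heat kernel. -/
lemma tail_bound {σ C K t : ℝ} (hσ : 0 < σ) (hC : 0 < C) (ht : 0 < t) (hK : 0 ≤ K)
    (ξ : EuclideanSpace ℝ (Fin d)) (j : Fin d) :
    ∫ x in {x : EuclideanSpace ℝ (Fin d) | K * Real.sqrt t ≤ |x j - ξ j|},
        C * heatKernel d σ t (x - ξ)
      ≤ C * 2 ^ ((d : ℝ) / 2) * Real.exp (-K ^ 2 / (4 * σ ^ 2)) := by
  set S : Set (EuclideanSpace ℝ (Fin d)) := {x | K * Real.sqrt t ≤ |x j - ξ j|} with hSdef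
  have hScont : Continuous fun x : EuclideanSpace ℝ (Fin d) => |x j - ξ j| :=
    ((EuclideanSpace.proj (𝕜 := ℝ) j).continuous.sub continuous_const).abs
  have hS : MeasurableSet S :=
    (isClosed_le continuous_const hScont).measurableSet
  set a : ℝ := (2 * π * t * σ ^ 2) ^ (-(d : ℝ) / 2) with ha
  have ha_pos : 0 < a := Real.rpow_pos_of_pos (by positivity) _
  set M : ℝ := C * Real.exp (-K ^ 2 / (4 * σ ^ 2)) * a with hM
  have hb : (0 : ℝ) < (4 * t * σ ^ 2)⁻¹ := by positivity
  have hpoint : ∀ x ∈ S, C * heatKernel d σ t (x - ξ)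
      ≤ M * Real.exp (-(4 * t * σ ^ 2)⁻¹ * ‖x - ξ‖ ^ 2) := by
    intro x hx
    have hxS : K * Real.sqrt t ≤ |x j - ξ j| := hx
    have hcoord : ((x - ξ) j) = x j - ξ j := rfl
    have h1 : K ^ 2 * t ≤ ‖x - ξ‖ ^ 2 := by
      have h2 : (K * Real.sqrt t) ^ 2 ≤ ((x - ξ) j) ^ 2 := by
        rw [hcoord, ← sq_abs (x j - ξ j)]
        exact pow_le_pow_left₀ (by positivity) hxS 2
      have h3 := coord_sq_le_norm_sq (x - ξ) j
      have h4 : (K * Real.sqrt t) ^ 2 = K ^ 2 * t := by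
        rw [mul_pow, Real.sq_sqrt ht.le]
      linarith
    have hexp : -‖x - ξ‖ ^ 2 / (2 * t * σ ^ 2)
        ≤ -K ^ 2 / (4 * σ ^ 2) + -(4 * t * σ ^ 2)⁻¹ * ‖x - ξ‖ ^ 2 := by
      have hD : (0 : ℝ) < 4 * t * σ ^ 2 := by positivity
      have e1 : -‖x - ξ‖ ^ 2 / (2 * t * σ ^ 2) = (-2 * ‖x - ξ‖ ^ 2) / (4 * t * σ ^ 2) := by
        field_simp
        ring
      have e2 : -K ^ 2 / (4 * σ ^ 2) = (-K ^ 2 * t) / (4 * t * σ ^ 2) := by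
        field_simp
      have e3 : -(4 * t * σ ^ 2)⁻¹ * ‖x - ξ‖ ^ 2 = (-‖x - ξ‖ ^ 2) / (4 * t * σ ^ 2) := by
        field_simp
      rw [e1, e2, e3, ← add_div, div_le_div_iff₀ hD hD]
      nlinarith [sq_nonneg (‖x - ξ‖)]
    calc C * heatKernel d σ t (x - ξ)
        = C * a * Real.exp (-‖x - ξ‖ ^ 2 / (2 * t * σ ^ 2)) := by
          unfold heatKernel; rw [← ha]; ring
      _ ≤ C * a * Real.exp (-K ^ 2 / (4 * σ ^ 2) + -(4 * t * σ ^ 2)⁻¹ * ‖x - ξ‖ ^ 2) :=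
          mul_le_mul_of_nonneg_left (Real.exp_le_exp.mpr hexp) (by positivity)
      _ = M * Real.exp (-(4 * t * σ ^ 2)⁻¹ * ‖x - ξ‖ ^ 2) := by
          rw [Real.exp_add, hM]; ring
  have hGint : Integrable fun x : EuclideanSpace ℝ (Fin d) =>
      M * Real.exp (-(4 * t * σ ^ 2)⁻¹ * ‖x - ξ‖ ^ 2) :=
    ((gauss_integrable (d := d) hb).comp_sub_right ξ).const_mul M
  have hHKint : Integrable fun x : EuclideanSpace ℝ (Fin d) =>
      C * heatKernel d σ t (x - ξ) := (heatKernel_integrable hσ ht ξ).const_mul C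
  calc ∫ x in S, C * heatKernel d σ t (x - ξ)
      ≤ ∫ x in S, M * Real.exp (-(4 * t * σ ^ 2)⁻¹ * ‖x - ξ‖ ^ 2) :=
        setIntegral_mono_on hHKint.integrableOn hGint.integrableOn hS hpoint
    _ ≤ ∫ x : EuclideanSpace ℝ (Fin d), M * Real.exp (-(4 * t * σ ^ 2)⁻¹ * ‖x - ξ‖ ^ 2) :=
        setIntegral_le_integral hGint (Filter.Eventually.of_forall fun x => by positivity)
    _ = M * (π / (4 * t * σ ^ 2)⁻¹) ^ ((d : ℝ) / 2) := by
        rw [integral_const_mul]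
        congr 1
        rw [integral_sub_right_eq_self
          (fun v : EuclideanSpace ℝ (Fin d) => Real.exp (-(4 * t * σ ^ 2)⁻¹ * ‖v‖ ^ 2)) ξ]
        exact gauss_integral hb
    _ = C * 2 ^ ((d : ℝ) / 2) * Real.exp (-K ^ 2 / (4 * σ ^ 2)) := by
        have h2tσ : (0 : ℝ) < 2 * π * t * σ ^ 2 := by positivity
        have e1 : π / (4 * t * σ ^ 2)⁻¹ = 2 * (2 * π * t * σ ^ 2) := by
          field_simp; ring
        rw [hM, ha, e1, Real.mul_rpow (by norm_num) h2tσ.le]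
        have e2 : (2 * π * t * σ ^ 2) ^ (-(d : ℝ) / 2) * (2 * π * t * σ ^ 2) ^ ((d : ℝ) / 2)
            = 1 := by
          rw [← Real.rpow_add h2tσ]
          rw [show -(d : ℝ) / 2 + (d : ℝ) / 2 = 0 by ring, Real.rpow_zero]
        calc C * Real.exp (-K ^ 2 / (4 * σ ^ 2)) * (2 * π * t * σ ^ 2) ^ (-(d : ℝ) / 2) *
              (2 ^ ((d : ℝ) / 2) * (2 * π * t * σ ^ 2) ^ ((d : ℝ) / 2))
            = C * 2 ^ ((d : ℝ) / 2) * Real.exp (-K ^ 2 / (4 * σ ^ 2)) *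
              ((2 * π * t * σ ^ 2) ^ (-(d : ℝ) / 2) * (2 * π * t * σ ^ 2) ^ ((d : ℝ) / 2)) := by
              ring
          _ = C * 2 ^ ((d : ℝ) / 2) * Real.exp (-K ^ 2 / (4 * σ ^ 2)) := by rw [e2, mul_one]

end Aux

/-- Localization of the quantile vector for probability densities satisfying
an Aronson-type two-sided Gaussian bound around a point `ξ`. -/
theorem quantile_localization_dirac_initial
    (d : ℕ) (hd : 1 ≤ d)
    (α : Fin d → ℝ) (hα : ∀ j, α j ∈ Ioo (0 : ℝ) 1)
    (T C₁ C₂ σ₁ σ₂ : ℝ) (hT : 0 < T) (hC₁ : 0 < C₁) (hC₂ : 0 < C₂)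
    (hσ₁ : 0 < σ₁) (hσ₂ : 0 < σ₂) :
    ∃ K δ ε : ℝ, 0 < K ∧ 0 < δ ∧ 0 < ε ∧ (∀ j, ε < min (α j) (1 - α j)) ∧
      ∀ ξ : EuclideanSpace ℝ (Fin d), ∀ t ∈ Ioc (0 : ℝ) T,
        ∀ u : EuclideanSpace ℝ (Fin d) → ℝ,
        Continuous u → (∀ x, 0 < u x) → Integrable u → (∫ x, u x) = 1 →
        (∀ x, C₁ * heatKernel d σ₁ t (x - ξ) ≤ u x) →
        (∀ x, u x ≤ C₂ * heatKernel d σ₂ t (x - ξ)) →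
        ((∀ x : EuclideanSpace ℝ (Fin d),
            (∀ j, |x j - ξ j| ≤ 2 * K * Real.sqrt t) → δ * t ^ (-(d : ℝ) / 2) ≤ u x) ∧
          (∀ q : Fin d → ℝ,
            (∀ j, ∫ x in {x : EuclideanSpace ℝ (Fin d) | x j ≤ q j}, u x = α j) →
            ∀ j, |q j - ξ j| ≤ K * Real.sqrt t) ∧
          ∫ x in {x : EuclideanSpace ℝ (Fin d) | ∃ j, K * Real.sqrt t ≤ |x j - ξ j|},
            u x ≤ ε) := by
  have hdpos : (0 : ℝ) < d := by exact_mod_cast hd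
  have hne : (Finset.univ : Finset (Fin d)).Nonempty := by
    have : Nonempty (Fin d) := Fin.pos_iff_nonempty.mp hd
    exact Finset.univ_nonempty
  set m : ℝ := Finset.univ.inf' hne fun j => min (α j) (1 - α j) with hm
  have hm_le : ∀ j, m ≤ min (α j) (1 - α j) := fun j =>
    Finset.inf'_le _ (Finset.mem_univ j)
  have hm_pos : 0 < m := by
    rw [hm, Finset.lt_inf'_iff]
    intro j _
    exact lt_min (hα j).1 (by linarith [(hα j).2])
  set c : ℝ := (d : ℝ) * C₂ * 2 ^ ((d : ℝ) / 2) with hc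
  have h2rpow : (0 : ℝ) < 2 ^ ((d : ℝ) / 2) := Real.rpow_pos_of_pos (by norm_num) _
  have hc_pos : 0 < c := by rw [hc]; positivity
  set K : ℝ := 2 * σ₂ * Real.sqrt (max 1 (Real.log (2 * c / m))) with hK
  have hmax_pos : (0 : ℝ) < max 1 (Real.log (2 * c / m)) :=
    lt_max_of_lt_left one_pos
  have hK_pos : 0 < K := by
    rw [hK]
    positivity
  have hexpK : Real.exp (-K ^ 2 / (4 * σ₂ ^ 2)) ≤ m / (2 * c) := by
    have hKsq : K ^ 2 = 4 * σ₂ ^ 2 * max 1 (Real.log (2 * c / m)) := by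
      rw [hK, mul_pow, mul_pow, Real.sq_sqrt hmax_pos.le]
      ring
    have harg : -K ^ 2 / (4 * σ₂ ^ 2) = -(max 1 (Real.log (2 * c / m))) := by
      rw [hKsq]
      field_simp
    rw [harg]
    have h1 : Real.exp (-(max 1 (Real.log (2 * c / m))))
        ≤ Real.exp (-(Real.log (2 * c / m))) :=
      Real.exp_le_exp.mpr (neg_le_neg (le_max_right _ _))
    have h2 : Real.exp (-(Real.log (2 * c / m))) = m / (2 * c) := by
      rw [Real.exp_neg, Real.exp_log (by positivity), inv_div]
    linarith
  set B : ℝ := C₂ * 2 ^ ((d : ℝ) / 2) * Real.exp (-K ^ 2 / (4 * σ₂ ^ 2)) with hB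
  have hB_le : B ≤ m / (2 * d) := by
    have h1 : B ≤ C₂ * 2 ^ ((d : ℝ) / 2) * (m / (2 * c)) :=
      mul_le_mul_of_nonneg_left hexpK (by positivity)
    have h2 : C₂ * 2 ^ ((d : ℝ) / 2) * (m / (2 * c)) = m / (2 * d) := by
      rw [hc]
      field_simp
    linarith
  have hdB : (d : ℝ) * B ≤ m / 2 := by
    have h1 : (d : ℝ) * B ≤ (d : ℝ) * (m / (2 * d)) :=
      mul_le_mul_of_nonneg_left hB_le hdpos.le
    have h2 : (d : ℝ) * (m / (2 * d)) = m / 2 := by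
      field_simp
    linarith
  have hB_lt_m : B < m := by
    have h1 : B ≤ (d : ℝ) * B := le_mul_of_one_le_left (by positivity) (by exact_mod_cast hd)
    linarith
  set δ : ℝ := C₁ * (2 * π * σ₁ ^ 2) ^ (-(d : ℝ) / 2) *
      Real.exp (-(2 * K ^ 2 * d / σ₁ ^ 2)) with hδ
  have hδ_pos : 0 < δ := by
    rw [hδ]
    have := Real.rpow_pos_of_pos (show (0 : ℝ) < 2 * π * σ₁ ^ 2 by positivity) (-(d : ℝ) / 2)
    positivity
  refine ⟨K, δ, m / 2, hK_pos, hδ_pos, by linarith,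
    fun j => lt_of_lt_of_le (by linarith) (hm_le j), ?_⟩
  intro ξ t ht u hu_cont hu_pos hu_int hu_one hlow hupp
  have ht0 : 0 < t := ht.1
  set S : Fin d → Set (EuclideanSpace ℝ (Fin d)) :=
    fun j => {x | K * Real.sqrt t ≤ |x j - ξ j|} with hSdef
  have hSmeas : ∀ j, MeasurableSet (S j) := by
    intro j
    have hScont : Continuous fun x : EuclideanSpace ℝ (Fin d) => |x j - ξ j| :=
      ((EuclideanSpace.proj (𝕜 := ℝ) j).continuous.sub continuous_const).abs
    exact (isClosed_le continuous_const hScont).measurableSet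
  have hu_nonneg : ∀ x, 0 ≤ u x := fun x => (hu_pos x).le
  have tail_u : ∀ j, ∫ x in S j, u x ≤ B := by
    intro j
    have h1 : ∫ x in S j, u x ≤ ∫ x in S j, C₂ * heatKernel d σ₂ t (x - ξ) :=
      setIntegral_mono_on hu_int.integrableOn
        (((heatKernel_integrable hσ₂ ht0 ξ).const_mul C₂).integrableOn)
        (hSmeas j) (fun x _ => hupp x)
    exact le_trans h1 (tail_bound hσ₂ hC₂ ht0 hK_pos.le ξ j)
  refine ⟨?_, ?_, ?_⟩
  · -- (a) lower bound on the cube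
    intro x hx
    have hnorm : ‖x - ξ‖ ^ 2 ≤ 4 * K ^ 2 * d * t := by
      rw [euclid_norm_sq]
      have hterm : ∀ j : Fin d, ((x - ξ) j) ^ 2 ≤ 4 * K ^ 2 * t := by
        intro j
        have hcoord : ((x - ξ) j) = x j - ξ j := rfl
        have h1 : |x j - ξ j| ^ 2 ≤ (2 * K * Real.sqrt t) ^ 2 :=
          pow_le_pow_left₀ (abs_nonneg _) (hx j) 2
        rw [sq_abs] at h1
        have h2 : (2 * K * Real.sqrt t) ^ 2 = 4 * K ^ 2 * t := by
          rw [mul_pow, mul_pow, Real.sq_sqrt ht0.le]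
          ring
        rw [hcoord]
        linarith
      calc ∑ j, ((x - ξ) j) ^ 2 ≤ ∑ _j : Fin d, 4 * K ^ 2 * t :=
            Finset.sum_le_sum fun j _ => hterm j
        _ = (d : ℝ) * (4 * K ^ 2 * t) := by
            rw [Finset.sum_const, Finset.card_univ, Fintype.card_fin, nsmul_eq_mul]
        _ = 4 * K ^ 2 * d * t := by ring
    have hexpineq : Real.exp (-(2 * K ^ 2 * d / σ₁ ^ 2))
        ≤ Real.exp (-‖x - ξ‖ ^ 2 / (2 * t * σ₁ ^ 2)) := by
      apply Real.exp_le_exp.mpr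
      have hD : (0 : ℝ) < 2 * t * σ₁ ^ 2 := by positivity
      rw [neg_div, neg_le_neg_iff, div_le_div_iff₀ hD (by positivity)]
      nlinarith [sq_nonneg σ₁]
    have hfactor : (2 * π * t * σ₁ ^ 2) ^ (-(d : ℝ) / 2)
        = (2 * π * σ₁ ^ 2) ^ (-(d : ℝ) / 2) * t ^ (-(d : ℝ) / 2) := by
      rw [show (2 * π * t * σ₁ ^ 2) = (2 * π * σ₁ ^ 2) * t by ring,
        Real.mul_rpow (by positivity) ht0.le]
    calc δ * t ^ (-(d : ℝ) / 2)
        = C₁ * ((2 * π * σ₁ ^ 2) ^ (-(d : ℝ) / 2) * t ^ (-(d : ℝ) / 2)) *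
          Real.exp (-(2 * K ^ 2 * d / σ₁ ^ 2)) := by rw [hδ]; ring
      _ ≤ C₁ * ((2 * π * σ₁ ^ 2) ^ (-(d : ℝ) / 2) * t ^ (-(d : ℝ) / 2)) *
          Real.exp (-‖x - ξ‖ ^ 2 / (2 * t * σ₁ ^ 2)) := by
          apply mul_le_mul_of_nonneg_left hexpineq
          have h1 := Real.rpow_pos_of_pos (show (0 : ℝ) < 2 * π * σ₁ ^ 2 by positivity)
            (-(d : ℝ) / 2)
          have h2 := Real.rpow_pos_of_pos ht0 (-(d : ℝ) / 2)
          positivity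
      _ = C₁ * heatKernel d σ₁ t (x - ξ) := by
          unfold heatKernel
          rw [hfactor]
          ring
      _ ≤ u x := hlow x
  · -- (b) quantile localization
    intro q hq j
    by_contra hcon
    rw [not_le] at hcon
    have hAmeas : MeasurableSet {x : EuclideanSpace ℝ (Fin d) | x j ≤ q j} :=
      (isClosed_le (EuclideanSpace.proj (𝕜 := ℝ) j).continuous continuous_const).measurableSet
    have hsplit := integral_add_compl hAmeas hu_int (f := u)
    rw [hu_one, hq j] at hsplit
    have hm_le_min := hm_le j
    rcases lt_abs.mp hcon with h | h
    · -- q j - ξ j > K √t : right tail too heavy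
      have hsub : {x : EuclideanSpace ℝ (Fin d) | x j ≤ q j}ᶜ ⊆ S j := by
        intro x hx
        have hx' : q j < x j := not_le.mp hx
        have : K * Real.sqrt t ≤ x j - ξ j := by linarith
        exact le_trans this (le_abs_self _)
      have h1 : ∫ x in {x : EuclideanSpace ℝ (Fin d) | x j ≤ q j}ᶜ, u x ≤ ∫ x in S j, u x :=
        setIntegral_mono_set hu_int.integrableOn
          (Filter.Eventually.of_forall hu_nonneg) (HasSubset.Subset.eventuallyLE hsub)
      have h2 : m ≤ 1 - α j := le_trans hm_le_min (min_le_right _ _)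
      have h3 := tail_u j
      linarith
    · -- ξ j - q j > K √t : left tail too heavy
      have hsub : {x : EuclideanSpace ℝ (Fin d) | x j ≤ q j} ⊆ S j := by
        intro x hx
        have hx' : x j ≤ q j := hx
        have : K * Real.sqrt t ≤ -(x j - ξ j) := by linarith
        exact le_trans this (neg_le_abs _)
      have h1 : ∫ x in {x : EuclideanSpace ℝ (Fin d) | x j ≤ q j}, u x ≤ ∫ x in S j, u x :=
        setIntegral_mono_set hu_int.integrableOn
          (Filter.Eventually.of_forall hu_nonneg) (HasSubset.Subset.eventuallyLE hsub)
      have h2 : m ≤ α j := le_trans hm_le_min (min_le_left _ _)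
      have h3 := tail_u j
      rw [hq j] at h1
      linarith
  · -- (c) tail mass bound
    have hU_eq : {x : EuclideanSpace ℝ (Fin d) | ∃ j, K * Real.sqrt t ≤ |x j - ξ j|}
        = ⋃ j, S j := by
      ext x
      simp [hSdef, Set.mem_iUnion]
    rw [hU_eq]
    have hUmeas : MeasurableSet (⋃ j, S j) := MeasurableSet.iUnion fun j => hSmeas j
    have hind : ∀ x, Set.indicator (⋃ j, S j) u x ≤ ∑ j, Set.indicator (S j) u x := by
      intro x
      by_cases hx : x ∈ ⋃ j, S j
      · rw [Set.indicator_of_mem hx]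
        obtain ⟨j₀, hj₀⟩ := Set.mem_iUnion.mp hx
        have : u x = Set.indicator (S j₀) u x := (Set.indicator_of_mem hj₀ u).symm
        rw [this]
        exact Finset.single_le_sum
          (fun i _ => Set.indicator_nonneg (fun y _ => hu_nonneg y) x) (Finset.mem_univ j₀)
      · rw [Set.indicator_of_notMem hx]
        exact Finset.sum_nonneg fun i _ =>
          Set.indicator_nonneg (fun y _ => hu_nonneg y) x
    calc ∫ x in ⋃ j, S j, u x
        = ∫ x, Set.indicator (⋃ j, S j) u x := (integral_indicator hUmeas).symm
      _ ≤ ∫ x, ∑ j, Set.indicator (S j) u x := by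
          apply integral_mono (hu_int.indicator hUmeas)
            (integrable_finset_sum _ fun j _ => hu_int.indicator (hSmeas j)) hind
      _ = ∑ j, ∫ x, Set.indicator (S j) u x :=
          integral_finset_sum _ fun j _ => hu_int.indicator (hSmeas j)
      _ = ∑ j, ∫ x in S j, u x := by
          refine Finset.sum_congr rfl fun j _ => ?_
          exact integral_indicator (hSmeas j)
      _ ≤ ∑ _j : Fin d, B := Finset.sum_le_sum fun j _ => tail_u j
      _ = (d : ℝ) * B := by
          rw [Finset.sum_const, Finset.card_univ, Fintype.card_fin, nsmul_eq_mul]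
      _ ≤ m / 2 := hdB
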